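/- Assume (A1)–(A2) with exponent α ∈ (0,1). Then the measure μ satisfies ∫_0^∞ (1+x^{2−α+α²})^{−1} dμ(x) < ∞, and consequently ∫_0^∞ (1+x²)^{−1} dμ(x) ≤ 2·∫_0^∞ (1+x^{2−α+α²})^{−1} dμ(x) < ∞. -/

import Mathlib

open MeasureTheory Real

noncomputable section

namespace DCV11

set_option maxHeartbeats 1000000 in

theorem mu_integrability
    (K0 : ℝ → ℝ) (μ : Measure ℝ)
    -- (A1)
    (hK0diff : ∀ t : ℝ, 0 < t → DifferentiableAt ℝ K0 t)
    (hμ : μ ≠ 0) (hμsupp : μ (Set.Iio 0) = 0)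
    (hμint : ∀ t : ℝ, 0 < t → Integrable (fun x => Real.exp (-t*x)) μ)
    (hrep : ∀ t : ℝ, 0 < t → deriv K0 t = -∫ x, Real.exp (-t*x) ∂μ)
    -- (A2)
    (α : ℝ) (hα : α ∈ Set.Ioo (0:ℝ) 1)
    (hK0int : IntegrableOn (fun t => |K0 t| * t ^ (-α + α^2)) (Set.Ioc (0:ℝ) 1)) :
    (∫⁻ x, ENNReal.ofReal ((1 + x ^ (2 - α + α^2))⁻¹) ∂μ) < ⊤ ∧
    (∫⁻ x, ENNReal.ofReal ((1 + x^2)⁻¹) ∂μ)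
      ≤ 2 * ∫⁻ x, ENNReal.ofReal ((1 + x ^ (2 - α + α^2))⁻¹) ∂μ := by
  obtain ⟨hα0, hα1⟩ := hα
  set γ : ℝ := -α + α^2 with hγdef
  have hγneg : γ < 0 := by nlinarith
  have hγgt : (-1 : ℝ) < γ := by nlinarith
  have h1γpos : 0 < 1 + γ := by linarith
  have h1γle : 1 + γ ≤ 1 := by linarith
  have hβeq : (2 : ℝ) - α + α^2 = 2 + γ := by rw [hγdef]; ring
  simp only [hβeq]
  set β : ℝ := 2 + γ with hβdef
  have hβpos : (0:ℝ) < β := by rw [hβdef]; linarith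
  have hβle2 : β ≤ 2 := by rw [hβdef]; linarith
  have hE : (0:ℝ) < Real.exp 1 := Real.exp_pos 1
  -- a.e. nonneg for μ
  have hae : ∀ᵐ x ∂μ, 0 ≤ x := by
    rw [MeasureTheory.ae_iff]
    convert hμsupp using 2
    ext x; simp [not_le]
  -- the Laplace transform F
  set F : ℝ → ℝ := fun t => ∫ x, Real.exp (-t*x) ∂μ with hFdef
  have hFnonneg : ∀ t : ℝ, 0 ≤ F t := fun t =>
    integral_nonneg fun x => (Real.exp_pos _).le
  have hFanti : ∀ s t : ℝ, 0 < s → s ≤ t → F t ≤ F s := by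
    intro s t hs hst
    refine integral_mono_ae (hμint t (lt_of_lt_of_le hs hst)) (hμint s hs) ?_
    filter_upwards [hae] with x hx
    exact Real.exp_le_exp.2 (by nlinarith)
  -- fundamental theorem of calculus
  have hFTC : ∀ a : ℝ, 0 < a → a ≤ 1 → ∫ s in a..1, F s = K0 a - K0 1 := by
    intro a ha ha1
    have hsub : Set.uIcc a 1 ⊆ Set.Ioi 0 := by
      rw [Set.uIcc_of_le ha1]
      intro x hx; exact lt_of_lt_of_le ha hx.1
    have hFint : IntervalIntegrable F volume a 1 := by
      refine AntitoneOn.intervalIntegrable ?_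
      intro s hs t ht hst
      exact hFanti s t (hsub hs) hst
    have h1 : ∫ s in a..1, -F s = K0 1 - K0 a := by
      refine intervalIntegral.integral_eq_sub_of_hasDerivAt ?_ hFint.neg
      intro s hs
      have hs0 : 0 < s := hsub hs
      have hd := (hK0diff s hs0).hasDerivAt
      have : deriv K0 s = -F s := by rw [hrep s hs0]
      rwa [this] at hd
    rw [intervalIntegral.integral_neg] at h1
    linarith
  -- key pointwise bound : t * F (2*t) ≤ |K0 t| + |K0 1| for t ∈ (0, 1/2]
  have hkey : ∀ t : ℝ, 0 < t → t ≤ 1/2 → t * F (2*t) ≤ |K0 t| + |K0 1| := by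
    intro t ht ht2
    have hlt : t ≤ 2*t := by linarith
    have hint12 : IntervalIntegrable F volume t (2*t) := by
      refine AntitoneOn.intervalIntegrable ?_
      rw [Set.uIcc_of_le hlt]
      intro s hs u hu hsu
      exact hFanti s u (lt_of_lt_of_le ht hs.1) hsu
    have hint21 : IntervalIntegrable F volume (2*t) 1 := by
      refine AntitoneOn.intervalIntegrable ?_
      rw [Set.uIcc_of_le (by linarith)]
      intro s hs u hu hsu
      exact hFanti s u (lt_of_lt_of_le (by linarith : (0:ℝ) < 2*t) hs.1) hsu
    have h1 : t * F (2*t) ≤ ∫ s in t..(2*t), F s := by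
      have hmono := intervalIntegral.integral_mono_on hlt intervalIntegrable_const hint12
        (fun s hs => hFanti s (2*t) (lt_of_lt_of_le ht hs.1) hs.2)
      rw [intervalIntegral.integral_const, smul_eq_mul] at hmono
      calc t * F (2*t) = (2*t - t) * F (2*t) := by ring_nf
        _ ≤ ∫ s in t..(2*t), F s := hmono
    have h2 : ∫ s in t..(2*t), F s ≤ ∫ s in t..1, F s := by
      rw [← intervalIntegral.integral_add_adjacent_intervals hint12 hint21]
      have h3 : 0 ≤ ∫ s in (2*t)..1, F s :=
        intervalIntegral.integral_nonneg (by linarith) (fun s _ => hFnonneg s)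
      linarith
    rw [hFTC t ht (by linarith)] at h2
    have := abs_le.mp (le_refl |K0 t|)
    calc t * F (2*t) ≤ K0 t - K0 1 := le_trans h1 h2
      _ ≤ |K0 t| + |K0 1| := by
          have := le_abs_self (K0 t); have := neg_abs_le (K0 1); linarith
  -- sigma-finiteness of μ
  have hfinIcc : ∀ n : ℕ, μ (Set.Icc (0:ℝ) n) < ⊤ := by
    intro n
    have h1 : ∫⁻ x, ENNReal.ofReal (Real.exp (-1*x)) ∂μ < ⊤ :=
      (hμint 1 one_pos).lintegral_lt_top
    set c : ENNReal := ENNReal.ofReal (Real.exp (-(n:ℝ))) with hc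
    have hc0 : c ≠ 0 := by
      simp only [hc, ne_eq, ENNReal.ofReal_eq_zero, not_le]; exact Real.exp_pos _
    have h2 : c * μ (Set.Icc (0:ℝ) n) ≤ ∫⁻ x, ENNReal.ofReal (Real.exp (-1*x)) ∂μ := by
      calc c * μ (Set.Icc (0:ℝ) n) = ∫⁻ _ in Set.Icc (0:ℝ) n, c ∂μ :=
            (setLIntegral_const _ _).symm
        _ ≤ ∫⁻ x in Set.Icc (0:ℝ) n, ENNReal.ofReal (Real.exp (-1*x)) ∂μ := by
            refine lintegral_mono_ae ?_
            refine (ae_restrict_iff' measurableSet_Icc).2 (ae_of_all _ ?_)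
            intro x hx
            exact ENNReal.ofReal_le_ofReal (Real.exp_le_exp.2 (by
              have := hx.1; have := hx.2; nlinarith))
        _ ≤ _ := setLIntegral_le_lintegral _ _
    calc μ (Set.Icc (0:ℝ) n) = (c⁻¹ * c) * μ (Set.Icc (0:ℝ) n) := by
          rw [ENNReal.inv_mul_cancel hc0 ENNReal.ofReal_ne_top, one_mul]
      _ = c⁻¹ * (c * μ (Set.Icc (0:ℝ) n)) := mul_assoc _ _ _
      _ ≤ c⁻¹ * ∫⁻ x, ENNReal.ofReal (Real.exp (-1*x)) ∂μ := mul_le_mul_right h2 _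
      _ < ⊤ := ENNReal.mul_lt_top (ENNReal.inv_lt_top.2 (pos_iff_ne_zero.mpr hc0)) h1
  haveI hSF : SigmaFinite μ := by
    refine ⟨⟨⟨fun n => Set.Iio 0 ∪ Set.Icc 0 n, fun _ => trivial, fun n => ?_, ?_⟩⟩⟩
    · calc μ (Set.Iio 0 ∪ Set.Icc 0 n) ≤ μ (Set.Iio 0) + μ (Set.Icc 0 n) :=
          measure_union_le _ _
        _ < ⊤ := by rw [hμsupp, zero_add]; exact hfinIcc n
    · ext x
      simp only [Set.mem_iUnion, Set.mem_union, Set.mem_Iio, Set.mem_Icc, Set.mem_univ,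
        iff_true]
      rcases lt_or_ge x 0 with hx | hx
      · exact ⟨0, Or.inl hx⟩
      · obtain ⟨n, hn⟩ := exists_nat_ge x
        exact ⟨n, Or.inr ⟨hx, hn⟩⟩
  -- the set S
  set S : Set ℝ := Set.Ioc (0:ℝ) (1/2) with hSdef
  have hSsub : S ⊆ Set.Ioc (0:ℝ) 1 := fun x hx => ⟨hx.1, le_trans hx.2 (by norm_num)⟩
  -- finiteness of A
  set A : ENNReal := ∫⁻ t in S, ENNReal.ofReal (t ^ (1+γ) * F (2*t)) with hAdef
  have hK0meas : AEMeasurable (fun t => ENNReal.ofReal (|K0 t| * t ^ γ))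
      (volume.restrict S) := by
    refine AEMeasurable.ennreal_ofReal ?_
    exact (hK0int.aestronglyMeasurable.aemeasurable).mono_measure
      (Measure.restrict_mono hSsub le_rfl)
  have hApt : ∀ t ∈ S, ENNReal.ofReal (t ^ (1+γ) * F (2*t))
      ≤ ENNReal.ofReal (|K0 t| * t ^ γ) + ENNReal.ofReal (|K0 1| * t ^ γ) := by
    intro t ht
    have ht0 : 0 < t := ht.1
    have ht2 : t ≤ 1/2 := ht.2
    have htγ : 0 ≤ t ^ γ := Real.rpow_nonneg ht0.le γ
    have hsplit : t ^ (1+γ) = t * t ^ γ := by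
      rw [Real.rpow_add ht0, Real.rpow_one]
    have hb : t ^ (1+γ) * F (2*t) ≤ |K0 t| * t ^ γ + |K0 1| * t ^ γ := by
      have h1 : t ^ (1+γ) * F (2*t) = (t * F (2*t)) * t ^ γ := by rw [hsplit]; ring
      rw [h1]
      have h2 := hkey t ht0 ht2
      nlinarith [hFnonneg (2*t)]
    calc ENNReal.ofReal (t ^ (1+γ) * F (2*t))
        ≤ ENNReal.ofReal (|K0 t| * t ^ γ + |K0 1| * t ^ γ) := ENNReal.ofReal_le_ofReal hb
      _ ≤ _ := ENNReal.ofReal_add_le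
  have hrpow_int : IntegrableOn (fun t : ℝ => t ^ γ) S := by
    have := intervalIntegral.intervalIntegrable_rpow' (a := 0) (b := 1/2) hγgt
    exact (intervalIntegrable_iff_integrableOn_Ioc_of_le (by norm_num)).1 this
  have hA : A < ⊤ := by
    calc A ≤ ∫⁻ t in S, (ENNReal.ofReal (|K0 t| * t ^ γ)
          + ENNReal.ofReal (|K0 1| * t ^ γ)) := by
          refine lintegral_mono_ae ?_
          exact (ae_restrict_iff' measurableSet_Ioc).2 (ae_of_all _ hApt)
      _ = (∫⁻ t in S, ENNReal.ofReal (|K0 t| * t ^ γ))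
          + ∫⁻ t in S, ENNReal.ofReal (|K0 1| * t ^ γ) :=
          lintegral_add_left' hK0meas _
      _ < ⊤ := by
          refine ENNReal.add_lt_top.2 ⟨?_, ?_⟩
          · calc (∫⁻ t in S, ENNReal.ofReal (|K0 t| * t ^ γ))
                ≤ ∫⁻ t in Set.Ioc (0:ℝ) 1, ENNReal.ofReal (|K0 t| * t ^ γ) :=
                  lintegral_mono_set hSsub
              _ < ⊤ := hK0int.setLIntegral_lt_top
          · exact IntegrableOn.setLIntegral_lt_top (hrpow_int.const_mul (|K0 1|))
  -- Tonelli setup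
  set g : ℝ → ℝ → ENNReal := fun t x =>
    ENNReal.ofReal (t ^ (1+γ)) * ENNReal.ofReal (Real.exp (-(2*t)*x)) with hgdef
  have hgmeas : AEMeasurable (Function.uncurry fun (x t : ℝ) => g t x)
      (μ.prod (volume.restrict S)) := by
    refine Measurable.aemeasurable ?_
    simp only [hgdef, Function.uncurry]
    refine Measurable.mul (f := fun p : ℝ × ℝ => ENNReal.ofReal (p.2 ^ (1+γ))) (g := fun p : ℝ × ℝ => ENNReal.ofReal (Real.exp (-(2*p.2)*p.1))) ?_ ?_
    · exact (measurable_snd.pow_const (1+γ) |>.ennreal_ofReal)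
    · exact (Real.continuous_exp.measurable.comp
        (((measurable_snd.const_mul 2).neg).mul measurable_fst)).ennreal_ofReal
  have hswap : ∫⁻ x, (∫⁻ t in S, g t x) ∂μ = ∫⁻ t in S, (∫⁻ x, g t x ∂μ) :=
    lintegral_lintegral_swap hgmeas
  have hval : ∀ t ∈ S, (∫⁻ x, g t x ∂μ) = ENNReal.ofReal (t ^ (1+γ) * F (2*t)) := by
    intro t ht
    have h2t : (0:ℝ) < 2*t := by linarith [ht.1]
    have h1 : (∫⁻ x, g t x ∂μ) = ENNReal.ofReal (t ^ (1+γ))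
        * ∫⁻ x, ENNReal.ofReal (Real.exp (-(2*t)*x)) ∂μ := by
      simp only [hgdef]
      exact lintegral_const_mul' _ _ ENNReal.ofReal_ne_top
    have h2 : ENNReal.ofReal (F (2*t))
        = ∫⁻ x, ENNReal.ofReal (Real.exp (-(2*t)*x)) ∂μ := by
      simp only [hFdef]
      exact ofReal_integral_eq_lintegral_ofReal (hμint (2*t) h2t)
        (ae_of_all _ fun x => (Real.exp_pos _).le)
    rw [h1, ← h2, ← ENNReal.ofReal_mul (Real.rpow_nonneg ht.1.le _)]
  have hAeq : ∫⁻ x, (∫⁻ t in S, g t x) ∂μ = A := by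
    rw [hswap, hAdef]
    exact setLIntegral_congr_fun measurableSet_Ioc hval
  -- the constant
  set q : ℝ := 4 ^ β with hqdef
  have hq0 : (0:ℝ) < q := Real.rpow_pos_of_pos (by norm_num) β
  set C : ENNReal := ENNReal.ofReal (16 * Real.exp 1 + Real.exp 1 * q) with hCdef
  have hEinv : Real.exp 1 * (Real.exp 1)⁻¹ = 1 := mul_inv_cancel₀ (ne_of_gt hE)
  -- pointwise lower bound
  have hlow : ∀ x : ℝ, 0 ≤ x →
      ENNReal.ofReal ((1 + x ^ β)⁻¹) ≤ C * ∫⁻ t in S, g t x := by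
    intro x hx
    rcases le_or_gt x 1 with hx1 | hx1
    · -- x ≤ 1
      have hsub2 : Set.Ioc (1/4 : ℝ) (1/2) ⊆ S := fun u hu => ⟨by linarith [hu.1], hu.2⟩
      have hpt : ∀ t ∈ Set.Ioc (1/4:ℝ) (1/2),
          ENNReal.ofReal ((1/4) * Real.exp (-1)) ≤ g t x := by
        intro t ht
        have ht1 : (1/4:ℝ) < t := ht.1
        have ht2 : t ≤ 1/2 := ht.2
        have hrp : (1/4:ℝ) ≤ t ^ (1+γ) := by
          calc (1/4:ℝ) = (1/4:ℝ) ^ (1:ℝ) := (Real.rpow_one _).symm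
            _ ≤ (1/4:ℝ) ^ (1+γ) :=
                Real.rpow_le_rpow_of_exponent_ge (by norm_num) (by norm_num) h1γle
            _ ≤ t ^ (1+γ) := Real.rpow_le_rpow (by norm_num) ht1.le h1γpos.le
        have hexp : Real.exp (-1) ≤ Real.exp (-(2*t)*x) := Real.exp_le_exp.2 (by nlinarith)
        simp only [hgdef]
        calc ENNReal.ofReal ((1/4) * Real.exp (-1))
            = ENNReal.ofReal (1/4) * ENNReal.ofReal (Real.exp (-1)) :=
              ENNReal.ofReal_mul (by norm_num)
          _ ≤ ENNReal.ofReal (t ^ (1+γ)) * ENNReal.ofReal (Real.exp (-(2*t)*x)) :=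
              mul_le_mul' (ENNReal.ofReal_le_ofReal hrp) (ENNReal.ofReal_le_ofReal hexp)
      have hmb : ENNReal.ofReal ((1/4) * Real.exp (-1)) * ENNReal.ofReal (1/4)
          ≤ ∫⁻ t in S, g t x := by
        calc ENNReal.ofReal ((1/4) * Real.exp (-1)) * ENNReal.ofReal (1/4)
            = ∫⁻ _ in Set.Ioc (1/4:ℝ) (1/2), ENNReal.ofReal ((1/4) * Real.exp (-1)) := by
              rw [setLIntegral_const, Real.volume_Ioc]; norm_num
          _ ≤ ∫⁻ t in Set.Ioc (1/4:ℝ) (1/2), g t x :=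
              lintegral_mono_ae ((ae_restrict_iff' measurableSet_Ioc).2 (ae_of_all _ hpt))
          _ ≤ ∫⁻ t in S, g t x := lintegral_mono_set hsub2
      calc ENNReal.ofReal ((1 + x ^ β)⁻¹)
          ≤ C * (ENNReal.ofReal ((1/4) * Real.exp (-1)) * ENNReal.ofReal (1/4)) := by
            rw [hCdef, ← ENNReal.ofReal_mul (by positivity), ← ENNReal.ofReal_mul (by positivity)]
            refine ENNReal.ofReal_le_ofReal ?_
            have hxb : (0:ℝ) ≤ x ^ β := Real.rpow_nonneg hx β
            have hinv : (1 + x ^ β)⁻¹ ≤ 1 := by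
              refine inv_le_one_of_one_le₀ ?_; linarith
            rw [Real.exp_neg]
            have hqE : q * (Real.exp 1 * (Real.exp 1)⁻¹) = q := by rw [hEinv, mul_one]
            nlinarith [hEinv, hqE, hq0]
        _ ≤ C * ∫⁻ t in S, g t x := mul_le_mul_right hmb _
    · -- x > 1
      have hx0 : (0:ℝ) < x := lt_trans one_pos hx1
      set a : ℝ := (4*x)⁻¹ with hadef
      have ha0 : (0:ℝ) < a := by positivity
      have hsub2 : Set.Ioc a ((2*x)⁻¹) ⊆ S := by
        intro u hu
        refine ⟨lt_trans ha0 hu.1, le_trans hu.2 ?_⟩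
        have h2x : (2:ℝ) ≤ 2*x := by linarith
        calc (2*x)⁻¹ ≤ (2:ℝ)⁻¹ := inv_anti₀ two_pos h2x
          _ = 1/2 := by norm_num
      have hxx : (2*x)⁻¹ * x = 1/2 := by field_simp
      have hpt : ∀ t ∈ Set.Ioc a ((2*x)⁻¹),
          ENNReal.ofReal (a ^ (1+γ) * Real.exp (-1)) ≤ g t x := by
        intro t ht
        have hrp : a ^ (1+γ) ≤ t ^ (1+γ) := Real.rpow_le_rpow ha0.le ht.1.le h1γpos.le
        have hexp : Real.exp (-1) ≤ Real.exp (-(2*t)*x) := by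
          refine Real.exp_le_exp.2 ?_
          nlinarith [ht.2, hx0, hxx]
        simp only [hgdef]
        calc ENNReal.ofReal (a ^ (1+γ) * Real.exp (-1))
            = ENNReal.ofReal (a ^ (1+γ)) * ENNReal.ofReal (Real.exp (-1)) :=
              ENNReal.ofReal_mul (Real.rpow_nonneg ha0.le _)
          _ ≤ ENNReal.ofReal (t ^ (1+γ)) * ENNReal.ofReal (Real.exp (-(2*t)*x)) :=
              mul_le_mul' (ENNReal.ofReal_le_ofReal hrp) (ENNReal.ofReal_le_ofReal hexp)
      have haa : (2*x)⁻¹ - a = a := by rw [hadef]; field_simp; ring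
      have hmb : ENNReal.ofReal (a ^ (1+γ) * Real.exp (-1)) * ENNReal.ofReal a
          ≤ ∫⁻ t in S, g t x := by
        calc ENNReal.ofReal (a ^ (1+γ) * Real.exp (-1)) * ENNReal.ofReal a
            = ∫⁻ _ in Set.Ioc a ((2*x)⁻¹), ENNReal.ofReal (a ^ (1+γ) * Real.exp (-1)) := by
              rw [setLIntegral_const, Real.volume_Ioc, haa]
          _ ≤ ∫⁻ t in Set.Ioc a ((2*x)⁻¹), g t x :=
              lintegral_mono_ae ((ae_restrict_iff' measurableSet_Ioc).2 (ae_of_all _ hpt))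
          _ ≤ ∫⁻ t in S, g t x := lintegral_mono_set hsub2
      have hab : a ^ (1+γ) * a = (q * x ^ β)⁻¹ := by
        have h1 : a ^ (1+γ) * a = a ^ β := by
          rw [show a ^ (1+γ) * a = a ^ (1+γ) * a ^ (1:ℝ) by rw [Real.rpow_one],
            ← Real.rpow_add ha0]
          norm_num [hβdef]; ring_nf
        rw [h1, hadef, Real.inv_rpow (by positivity : (0:ℝ) ≤ 4*x),
          Real.mul_rpow (by norm_num) hx0.le, ← hqdef]
      have hp : (0:ℝ) < x ^ β := Real.rpow_pos_of_pos hx0 β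
      calc ENNReal.ofReal ((1 + x ^ β)⁻¹)
          ≤ C * (ENNReal.ofReal (a ^ (1+γ) * Real.exp (-1)) * ENNReal.ofReal a) := by
            rw [hCdef, ← ENNReal.ofReal_mul (by positivity), ← ENNReal.ofReal_mul (by positivity)]
            refine ENNReal.ofReal_le_ofReal ?_
            have hLHS : (1 + x ^ β)⁻¹ ≤ (x ^ β)⁻¹ := inv_anti₀ hp (by linarith)
            have hu : a ^ (1+γ) * Real.exp (-1) * a = (q * x ^ β)⁻¹ * (Real.exp 1)⁻¹ := by
              rw [Real.exp_neg, ← hab]; ring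
            have hmain : (16 * Real.exp 1 + Real.exp 1 * q) * ((q * x ^ β)⁻¹ * (Real.exp 1)⁻¹)
                = 16 * (q * x ^ β)⁻¹ + (x ^ β)⁻¹ := by
              field_simp
            rw [hu, hmain]
            have hpos : (0:ℝ) ≤ (q * x ^ β)⁻¹ := by positivity
            linarith
        _ ≤ C * ∫⁻ t in S, g t x := mul_le_mul_right hmb _
  -- conclusion, first part
  have hfinal1 : (∫⁻ x, ENNReal.ofReal ((1 + x ^ β)⁻¹) ∂μ) < ⊤ := by
    calc (∫⁻ x, ENNReal.ofReal ((1 + x ^ β)⁻¹) ∂μ)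
        ≤ ∫⁻ x, (C * ∫⁻ t in S, g t x) ∂μ := by
          refine lintegral_mono_ae ?_
          filter_upwards [hae] with x hx using hlow x hx
      _ = C * ∫⁻ x, (∫⁻ t in S, g t x) ∂μ := lintegral_const_mul' _ _ (by rw [hCdef]; exact ENNReal.ofReal_ne_top)
      _ = C * A := by rw [hAeq]
      _ < ⊤ := ENNReal.mul_lt_top (by rw [hCdef]; exact ENNReal.ofReal_lt_top) hA
  refine ⟨hfinal1, ?_⟩
  -- second part
  have hpt2 : ∀ x : ℝ, 0 ≤ x →
      ENNReal.ofReal ((1 + x^2)⁻¹) ≤ 2 * ENNReal.ofReal ((1 + x ^ β)⁻¹) := by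
    intro x hx
    have hxb : (0:ℝ) ≤ x ^ β := Real.rpow_nonneg hx β
    have hkey2 : x ^ β ≤ 1 + x^2 := by
      rcases le_or_gt x 1 with h1 | h1
      · have := Real.rpow_le_one hx h1 hβpos.le
        nlinarith [sq_nonneg x]
      · have h2 : x ^ β ≤ x ^ (2:ℝ) := Real.rpow_le_rpow_of_exponent_le h1.le hβle2
        have h3 : x ^ (2:ℝ) = x^2 := by
          rw [show (2:ℝ) = ((2:ℕ):ℝ) by norm_num, Real.rpow_natCast]
        rw [h3] at h2
        nlinarith
    have h2pos : (0:ℝ) < 1 + x^2 := by positivity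
    have hbpos : (0:ℝ) < 1 + x ^ β := by linarith
    have hr : (1 + x^2)⁻¹ ≤ 2 * (1 + x ^ β)⁻¹ := by
      have h3 : (2 * (1 + x^2))⁻¹ ≤ (1 + x ^ β)⁻¹ := inv_anti₀ hbpos (by nlinarith)
      calc (1 + x^2)⁻¹ = 2 * (2 * (1 + x^2))⁻¹ := by
            rw [mul_inv]
            field_simp
        _ ≤ 2 * (1 + x ^ β)⁻¹ := by linarith
    calc ENNReal.ofReal ((1 + x^2)⁻¹) ≤ ENNReal.ofReal (2 * (1 + x ^ β)⁻¹) :=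
          ENNReal.ofReal_le_ofReal hr
      _ = 2 * ENNReal.ofReal ((1 + x ^ β)⁻¹) := by
          rw [ENNReal.ofReal_mul (by norm_num)]
          norm_num
  calc (∫⁻ x, ENNReal.ofReal ((1 + x^2)⁻¹) ∂μ)
      ≤ ∫⁻ x, 2 * ENNReal.ofReal ((1 + x ^ β)⁻¹) ∂μ := by
        refine lintegral_mono_ae ?_
        filter_upwards [hae] with x hx using hpt2 x hx
    _ = 2 * ∫⁻ x, ENNReal.ofReal ((1 + x ^ β)⁻¹) ∂μ :=
        lintegral_const_mul' _ _ (by norm_num)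

end DCV11
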